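/- For any n×m real matrix X (with n ≤ m) and any integer r with 1 ≤ r ≤ n, the sum of the singular values from index r to n minus the Euclidean norm of the vector of singular values from index r to n is bounded below by half of the sum of singular values from index r+1 to n, and bounded above by the sum of singular values from index r+1 to n. That is, (1/2)·∑_{i=r+1}^n σ_i(X) ≤ ∑_{i=r}^n σ_i(X) − √(∑_{i=r}^n σ_i(X)²) ≤ ∑_{i=r+1}^n σ_i(X). -/

import Mathlib

/-- Singular values of a real `n × m` matrix (in some order), defined as the square
roots of the eigenvalues of `X * Xᴴ`. -/
noncomputable def singVals {n m : ℕ} (X : Matrix (Fin n) (Fin m) ℝ) (i : Fin n) : ℝ :=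
  Real.sqrt ((Matrix.isHermitian_mul_conjTranspose_self X).eigenvalues i)

/-- for the nonincreasingly ordered singular values `σ 1 ≥ ⋯ ≥ σ n ≥ 0`
of a real `n × m` matrix `X` (with `n ≤ m`) and `1 ≤ r ≤ n`,
`(1/2)·∑_{i=r+1}^n σ i ≤ ∑_{i=r}^n σ i − √(∑_{i=r}^n (σ i)²) ≤ ∑_{i=r+1}^n σ i`. -/
theorem stmt0 (n m r : ℕ) (hnm : n ≤ m) (hr1 : 1 ≤ r) (hrn : r ≤ n)
    (X : Matrix (Fin n) (Fin m) ℝ) (σ : ℕ → ℝ)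
    (hσ : ∃ e : Equiv.Perm (Fin n), ∀ i : Fin n, σ (i.1 + 1) = singVals X (e i))
    (hnonneg : ∀ i, 1 ≤ i → i ≤ n → 0 ≤ σ i)
    (hmono : ∀ i j, 1 ≤ i → i ≤ j → j ≤ n → σ j ≤ σ i) :
    (1 / 2) * (∑ i ∈ Finset.Icc (r + 1) n, σ i) ≤
        (∑ i ∈ Finset.Icc r n, σ i) - Real.sqrt (∑ i ∈ Finset.Icc r n, (σ i) ^ 2) ∧
      (∑ i ∈ Finset.Icc r n, σ i) - Real.sqrt (∑ i ∈ Finset.Icc r n, (σ i) ^ 2) ≤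
        ∑ i ∈ Finset.Icc (r + 1) n, σ i := by
  clear hσ hnm X
  have hsplit : Finset.Icc r n = insert r (Finset.Icc (r + 1) n) := by
    rw [Finset.Icc_add_one_left_eq_Ioc, Finset.Ioc_insert_left hrn]
  have hnotmem : r ∉ Finset.Icc (r + 1) n := by simp
  set a := σ r with ha_def
  set S1 := ∑ i ∈ Finset.Icc (r + 1) n, σ i with hS1_def
  set T1 := ∑ i ∈ Finset.Icc (r + 1) n, (σ i) ^ 2 with hT1_def
  have hsum : ∑ i ∈ Finset.Icc r n, σ i = a + S1 := by
    rw [hsplit, Finset.sum_insert hnotmem]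
  have hsq : ∑ i ∈ Finset.Icc r n, (σ i) ^ 2 = a ^ 2 + T1 := by
    rw [hsplit, Finset.sum_insert hnotmem]
  have ha : 0 ≤ a := hnonneg r hr1 hrn
  have hmem : ∀ i ∈ Finset.Icc (r + 1) n, 1 ≤ i ∧ i ≤ n ∧ σ i ≤ a := by
    intro i hi
    rw [Finset.mem_Icc] at hi
    refine ⟨le_trans (Nat.le_add_left 1 r) hi.1, hi.2, hmono r i hr1 (le_trans (Nat.le_succ r) hi.1) hi.2⟩
  have hS1 : 0 ≤ S1 :=
    Finset.sum_nonneg fun i hi => hnonneg i (hmem i hi).1 (hmem i hi).2.1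
  have hT1 : 0 ≤ T1 := Finset.sum_nonneg fun i hi => sq_nonneg _
  have hT1a : T1 ≤ a * S1 := by
    rw [hT1_def, hS1_def, Finset.mul_sum]
    refine Finset.sum_le_sum fun i hi => ?_
    have h1 := hnonneg i (hmem i hi).1 (hmem i hi).2.1
    have h2 := (hmem i hi).2.2
    nlinarith
  rw [hsum, hsq]
  have hlow : a ≤ Real.sqrt (a ^ 2 + T1) := by
    calc a = Real.sqrt (a ^ 2) := by rw [Real.sqrt_sq ha]
    _ ≤ Real.sqrt (a ^ 2 + T1) := Real.sqrt_le_sqrt (by linarith)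
  have hhigh : Real.sqrt (a ^ 2 + T1) ≤ a + S1 / 2 := by
    calc Real.sqrt (a ^ 2 + T1) ≤ Real.sqrt ((a + S1 / 2) ^ 2) :=
          Real.sqrt_le_sqrt (by nlinarith)
    _ = a + S1 / 2 := Real.sqrt_sq (by linarith)
  constructor <;> linarith
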